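/- Let x = diag(λ₁, λ₂, λ₃) be a diagonal 3×3 complex matrix with λ₁λ₂λ₃ = 1 and each |λ_i| = 1, let μ₁, μ₂, μ₃ be complex numbers, let P = (p_{ij}) be a matrix in SU(2,1), and let y = P·diag(μ₁, μ₂, μ₃)·P⁻¹. Let P̂ be the real 3×3 matrix with entries P̂_{ij} = ε_{ij}·|p_{ij}|², where ε_{ij} = −1 if exactly one of i, j equals 3 and ε_{ij} = +1 otherwise. Then tr(xy) = Σ_{i,j} λ_i · P̂_{ij} · μ_j and tr(x⁻¹y) = Σ_{i,j} λ_i⁻¹ · P̂_{ij} · μ_j. -/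

import Mathlib

open Matrix

/-- The matrix of the Hermitian form of signature (2,1) on ℂ³. -/
def formJ : Matrix (Fin 3) (Fin 3) ℂ := Matrix.diagonal ![1, 1, -1]

/-- A matrix belongs to SU(2,1) iff it has determinant 1 and preserves the form `formJ`. -/
def SU21 (A : Matrix (Fin 3) (Fin 3) ℂ) : Prop :=
  A.det = 1 ∧ Aᴴ * formJ * A = formJ

/-- The sign `ε i j`, equal to `-1` when exactly one of `i`, `j` is the last index
and `+1` otherwise. -/
def eps (i j : Fin 3) : ℝ := if (i = 2 ↔ j = 2) then 1 else -1

theorem trace_xy_via_Phat (lam mu : Fin 3 → ℂ)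
    (hlam1 : lam 0 * lam 1 * lam 2 = 1) (hlam : ∀ i, ‖lam i‖ = 1)
    (P : Matrix (Fin 3) (Fin 3) ℂ) (hP : SU21 P)
    (x y : Matrix (Fin 3) (Fin 3) ℂ)
    (hx : x = Matrix.diagonal lam)
    (hy : y = P * Matrix.diagonal mu * P⁻¹) :
    (x * y).trace =
      ∑ i : Fin 3, ∑ j : Fin 3, lam i * ((eps i j * Complex.normSq (P i j) : ℝ) : ℂ) * mu j ∧
    (x⁻¹ * y).trace =
      ∑ i : Fin 3, ∑ j : Fin 3, (lam i)⁻¹ * ((eps i j * Complex.normSq (P i j) : ℝ) : ℂ) * mu j := by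
  have hJJ : formJ * formJ = 1 := by
    ext i j
    fin_cases i <;> fin_cases j <;>
      simp [formJ, Matrix.mul_apply, Fin.sum_univ_three, Matrix.one_apply]
  have h1 : (formJ * Pᴴ * formJ) * P = 1 := by
    calc formJ * Pᴴ * formJ * P = formJ * (Pᴴ * formJ * P) := by
          simp only [Matrix.mul_assoc]
      _ = formJ * formJ := by rw [hP.2]
      _ = 1 := hJJ
  have hPinv : P⁻¹ = formJ * Pᴴ * formJ := Matrix.inv_eq_left_inv h1
  have hlamne : ∀ i, lam i ≠ 0 := by
    intro i h
    have := hlam i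
    simp [h] at this
  have hxinv : x⁻¹ = Matrix.diagonal (fun i => (lam i)⁻¹) := by
    rw [hx]
    refine Matrix.inv_eq_left_inv ?_
    rw [Matrix.diagonal_mul_diagonal]
    simp [inv_mul_cancel₀ (hlamne _)]
  have hQ : ∀ j i, (formJ * Pᴴ * formJ) j i
      = ((eps i j : ℝ) : ℂ) * (starRingEnd ℂ) (P i j) := by
    intro j i
    fin_cases i <;> fin_cases j <;>
      simp [formJ, eps, Matrix.mul_apply, Fin.sum_univ_three]
  have key : ∀ (l : Fin 3 → ℂ),
      (Matrix.diagonal l * (P * Matrix.diagonal mu * (formJ * Pᴴ * formJ))).trace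
      = ∑ i : Fin 3, ∑ j : Fin 3,
          l i * ((eps i j * Complex.normSq (P i j) : ℝ) : ℂ) * mu j := by
    intro l
    have expand : ∀ i, (P * Matrix.diagonal mu * (formJ * Pᴴ * formJ)) i i
        = ∑ j : Fin 3, P i j * mu j * (((eps i j : ℝ) : ℂ) * (starRingEnd ℂ) (P i j)) := by
      intro i
      rw [Matrix.mul_apply]
      refine Finset.sum_congr rfl fun j _ => ?_
      rw [hQ, Matrix.mul_apply_eq_vecMul]
      congr 1
      simp [Matrix.vecMul, Matrix.diagonal, dotProduct, Fin.sum_univ_three,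
        Matrix.diagonal_apply]
    have hdiag : ∀ i, (Matrix.diagonal l * (P * Matrix.diagonal mu * (formJ * Pᴴ * formJ))) i i
        = l i * (P * Matrix.diagonal mu * (formJ * Pᴴ * formJ)) i i := by
      intro i
      rw [Matrix.mul_apply, Finset.sum_eq_single i]
      · simp
      · intro b _ hb
        simp [Matrix.diagonal_apply_ne' _ hb]
      · simp
    rw [Matrix.trace]
    unfold Matrix.diag
    refine Finset.sum_congr rfl fun i _ => ?_
    rw [hdiag, expand, Finset.mul_sum]
    refine Finset.sum_congr rfl fun j _ => ?_
    push_cast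
    rw [← Complex.mul_conj]
    ring
  subst hx hy
  rw [hPinv, hxinv]
  exact ⟨key lam, key fun i => (lam i)⁻¹⟩
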